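/- Let M be a strictly positive integer, let K be a nonempty subset of ℕ, and for every i ∈ {1,…,M} let H_i be a separable real Hilbert space with orthonormal basis (e_{i,k})_{k∈K}. Let β > 0 and let φ : ℝ → ℝ be an even differentiable convex function such that φ ≥ φ(0) = 0 and φ' is β-Lipschitzian. On the Hilbert direct sum H_1 ⊕ ⋯ ⊕ H_M define h(x_1,…,x_M) = Σ_{k∈K} φ(‖(⟨x_1, e_{1,k}⟩, …, ⟨x_M, e_{M,k}⟩)‖_2). Let γ > 0 and (x_1,…,x_M) ∈ H_1 ⊕ ⋯ ⊕ H_M, and set δ_k = prox_{γφ}(‖(⟨x_1,e_{1,k}⟩,…,⟨x_M,e_{M,k}⟩)‖_2)/‖(⟨x_1,e_{1,k}⟩,…,⟨x_M,e_{M,k}⟩)‖_2 when max_{1≤i≤M} |⟨x_i, e_{i,k}⟩| > 0 and δ_k = 1 otherwise. Then prox_{γh}(x_1,…,x_M) = (Σ_{k∈K} δ_k ⟨x_1, e_{1,k}⟩ e_{1,k}, …, Σ_{k∈K} δ_k ⟨x_M, e_{M,k}⟩ e_{M,k}). -/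

import Mathlib

/-- A finite `L²` product of complete spaces is complete (the uniformity of `PiLp` is
definitionally the product uniformity). -/


lemma aux_mono (φ : ℝ → ℝ) (hconv : ConvexOn ℝ Set.univ φ)
    (hφ0 : φ 0 = 0) (hφnn : ∀ t, φ 0 ≤ φ t) :
    ∀ a b : ℝ, 0 ≤ a → a ≤ b → φ a ≤ φ b := by
  intro a b ha hab
  rcases eq_or_lt_of_le (ha.trans hab) with hb | hb
  · have : a = 0 := le_antisymm (hab.trans hb.symm.le) ha
    rw [this, ← hb]
  · have hb' : (0:ℝ) < b := hb
    have hl : a / b ∈ Set.Icc (0:ℝ) 1 := by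
      constructor
      · positivity
      · exact div_le_one_of_le₀ hab hb'.le
    have := hconv.2 (Set.mem_univ (0:ℝ)) (Set.mem_univ b)
      (show (0:ℝ) ≤ 1 - a / b by linarith [hl.2]) hl.1 (by ring)
    have hφb : 0 ≤ φ b := hφ0 ▸ hφnn b
    have hab' : (1 - a/b) • (0:ℝ) + (a/b) • b = a := by
      simp only [smul_eq_mul, mul_zero, zero_add]; field_simp
    rw [hab'] at this
    simp only [smul_eq_mul] at this
    calc φ a ≤ (1 - a/b) * φ 0 + (a/b) * φ b := this
      _ = (a/b) * φ b := by rw [hφ0]; ring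
      _ ≤ 1 * φ b := by
          apply mul_le_mul_of_nonneg_right hl.2 hφb
      _ = φ b := one_mul _

lemma aux_deriv0 (φ : ℝ → ℝ) (heven : ∀ t, φ (-t) = φ t)
    (φ' : ℝ → ℝ) (hderiv : ∀ t, HasDerivAt φ (φ' t) t) : φ' 0 = 0 := by
  have h1 : HasDerivAt (fun t : ℝ => φ (-t)) (φ' 0 * (-1)) 0 := by
    have := (hderiv (-(0:ℝ))).comp (0:ℝ) (hasDerivAt_neg (0:ℝ))
    simpa [Function.comp_def] using this
  have h2 : (fun t : ℝ => φ (-t)) = φ := funext heven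
  rw [h2] at h1
  have := h1.unique (hderiv 0)
  linarith

lemma aux_quad (φ : ℝ → ℝ) (heven : ∀ t, φ (-t) = φ t) (hφ0 : φ 0 = 0)
    (φ' : ℝ → ℝ) (hderiv : ∀ t, HasDerivAt φ (φ' t) t)
    (β : ℝ) (hβ : 0 < β) (hlip : LipschitzWith (Real.toNNReal β) φ') :
    ∀ t : ℝ, 0 ≤ t → φ t ≤ β * t ^ 2 := by
  intro t ht
  rcases eq_or_lt_of_le ht with h0 | h0
  · rw [← h0, hφ0]; norm_num
  · obtain ⟨c, hc, hc2⟩ := exists_hasDerivAt_eq_slope φ φ' h0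
      (fun s _ => (hderiv s).continuousAt.continuousWithinAt) (fun s _ => hderiv s)
    have hd0 : φ' 0 = 0 := aux_deriv0 φ heven φ' hderiv
    have hlc : |φ' c| ≤ β * c := by
      have := hlip.dist_le_mul c 0
      rw [Real.dist_eq, Real.dist_eq, hd0, sub_zero, sub_zero] at this
      calc |φ' c| ≤ Real.toNNReal β * |c| := this
        _ = β * c := by
            rw [Real.coe_toNNReal _ hβ.le, abs_of_pos hc.1]
    have hφt : φ t = φ' c * t := by
      rw [hφ0] at hc2
      field_simp at hc2
      linarith
    rw [hφt]
    calc φ' c * t ≤ |φ' c| * t := by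
          apply mul_le_mul_of_nonneg_right (le_abs_self _) ht
      _ ≤ (β * c) * t := mul_le_mul_of_nonneg_right hlc ht
      _ ≤ (β * t) * t := by nlinarith [mul_le_mul_of_nonneg_left hc.2.le (mul_nonneg hβ.le ht)]
      _ = β * t ^ 2 := by ring

lemma aux_parseval {E : Type*} [NormedAddCommGroup E] [InnerProductSpace ℝ E]
    {ι : Type*} (b : HilbertBasis ι ℝ E) (v : E) :
    HasSum (fun k => (inner ℝ v (b k) : ℝ) ^ 2) (‖v‖ ^ 2) := by
  have := b.hasSum_inner_mul_inner v v
  have h2 : (fun k => (inner ℝ v (b k) : ℝ) * inner ℝ (b k) v)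
      = fun k => (inner ℝ v (b k) : ℝ) ^ 2 := by
    funext k
    rw [real_inner_comm (b k) v, sq]
  rw [h2, real_inner_self_eq_norm_sq] at this
  exact this

lemma aux_recon {E : Type*} [NormedAddCommGroup E] [InnerProductSpace ℝ E] [CompleteSpace E]
    {ι : Type*} (b : HilbertBasis ι ℝ E) (c : ι → ℝ) (hc : Summable fun k => (c k) ^ 2) :
    ∃ v : E, HasSum (fun k => c k • b k) v ∧ ∀ k, (inner ℝ v (b k) : ℝ) = c k := by
  have hmem : Memℓp c 2 := by
    apply memℓp_gen
    have : (fun k => ‖c k‖ ^ (2 : ENNReal).toReal) = fun k => (c k) ^ 2 := by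
      funext k
      rw [ENNReal.toReal_ofNat, show ((2:ℝ)) = ((2:ℕ):ℝ) by norm_num,
        Real.rpow_natCast, Real.norm_eq_abs, sq_abs]
    rw [this]
    exact hc
  refine ⟨b.repr.symm ⟨c, hmem⟩, ?_, ?_⟩
  · exact b.hasSum_repr_symm ⟨c, hmem⟩
  · intro k
    rw [real_inner_comm, ← b.repr_apply_apply, LinearIsometryEquiv.apply_symm_apply]

lemma aux_prox_nonneg (γ : ℝ) (hγ : 0 < γ) (φ : ℝ → ℝ) (heven : ∀ t, φ (-t) = φ t)
    (hφ0 : φ 0 = 0) (hφnn : ∀ t, φ 0 ≤ φ t) (proxφ : ℝ → ℝ)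
    (hproxφ : ∀ s t : ℝ, γ * φ (proxφ s) + (s - proxφ s) ^ 2 / 2
      ≤ γ * φ t + (s - t) ^ 2 / 2) :
    ∀ s : ℝ, 0 ≤ s → 0 ≤ proxφ s := by
  intro s hs
  rcases eq_or_lt_of_le hs with h0 | h0
  · have h1 := hproxφ 0 0
    rw [sub_zero, hφ0] at h1
    have h2 := hφ0 ▸ hφnn (proxφ 0)
    rw [← h0]
    nlinarith [sq_nonneg (proxφ 0)]
  · have h1 := hproxφ s (-(proxφ s))
    rw [heven (proxφ s), sub_neg_eq_add] at h1
    nlinarith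
lemma aux_prox_le (γ : ℝ) (hγ : 0 < γ) (φ : ℝ → ℝ)
    (hconv : ConvexOn ℝ Set.univ φ)
    (hφ0 : φ 0 = 0) (hφnn : ∀ t, φ 0 ≤ φ t)
    (hmono : ∀ a b : ℝ, 0 ≤ a → a ≤ b → φ a ≤ φ b)
    (proxφ : ℝ → ℝ)
    (hproxφ : ∀ s t : ℝ, γ * φ (proxφ s) + (s - proxφ s) ^ 2 / 2
      ≤ γ * φ t + (s - t) ^ 2 / 2)
    (hnn : ∀ s : ℝ, 0 ≤ s → 0 ≤ proxφ s) :
    ∀ s : ℝ, 0 ≤ s → proxφ s ≤ s := by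
  intro s hs
  by_contra hps
  push_neg at hps
  have h1 := hproxφ s s
  have h2 := hmono s (proxφ s) hs hps.le
  nlinarith

lemma aux_enorm {M : ℕ} (w : Fin M → ℝ) :
    ‖(WithLp.equiv 2 (Fin M → ℝ)).symm w‖ = Real.sqrt (∑ i, w i ^ 2) := by
  rw [EuclideanSpace.norm_eq]
  congr 1
  refine Finset.sum_congr rfl fun i _ => ?_
  rw [Real.norm_eq_abs, sq_abs]
  rfl

lemma aux_tri {M : ℕ} (u v : Fin M → ℝ) :
    (Real.sqrt (∑ i, u i ^ 2) - Real.sqrt (∑ i, v i ^ 2)) ^ 2 ≤ ∑ i, (u i - v i) ^ 2 := by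
  have h1 := abs_norm_sub_norm_le ((WithLp.equiv 2 (Fin M → ℝ)).symm u)
    ((WithLp.equiv 2 (Fin M → ℝ)).symm v)
  change |‖_‖ - ‖_‖| ≤ ‖(WithLp.equiv 2 (Fin M → ℝ)).symm (u - v)‖ at h1
  rw [aux_enorm, aux_enorm, aux_enorm] at h1
  have h2 := pow_le_pow_left₀ (abs_nonneg _) h1 2
  rw [sq_abs] at h2
  calc (Real.sqrt (∑ i, u i ^ 2) - Real.sqrt (∑ i, v i ^ 2)) ^ 2
      ≤ Real.sqrt (∑ i, (u - v) i ^ 2) ^ 2 := h2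
    _ = ∑ i, (u i - v i) ^ 2 := by
        rw [Real.sq_sqrt (by positivity)]
        simp [Pi.sub_apply]

lemma aux_tri2 {M : ℕ} (u v : Fin M → ℝ) :
    Real.sqrt (∑ i, ((u i + v i) / 2) ^ 2)
      ≤ (Real.sqrt (∑ i, u i ^ 2) + Real.sqrt (∑ i, v i ^ 2)) / 2 := by
  have h1 := norm_add_le ((WithLp.equiv 2 (Fin M → ℝ)).symm u)
    ((WithLp.equiv 2 (Fin M → ℝ)).symm v)
  change ‖(WithLp.equiv 2 (Fin M → ℝ)).symm (u + v)‖ ≤ _ at h1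
  rw [aux_enorm, aux_enorm, aux_enorm] at h1
  have h2 : (fun i => ((u i + v i) / 2) ^ 2) = fun i => ((u + v) i / 2) ^ 2 := rfl
  calc Real.sqrt (∑ i, ((u i + v i) / 2) ^ 2)
      = Real.sqrt ((∑ i, (u + v) i ^ 2) / 4) := by
        congr 1
        rw [Finset.sum_div]
        refine Finset.sum_congr rfl fun i _ => ?_
        show ((u i + v i) / 2) ^ 2 = _
        simp only [Pi.add_apply]
        ring
    _ = Real.sqrt (∑ i, (u + v) i ^ 2) / 2 := by
        rw [Real.sqrt_div (by positivity), show (4:ℝ) = 2^2 by norm_num,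
          Real.sqrt_sq (by norm_num)]
    _ ≤ _ := by linarith


set_option maxHeartbeats 1000000

instance piLpCompleteSpace (p : ENNReal) {ι : Type*} [Fintype ι]
    (H : ι → Type*) [∀ i, NormedAddCommGroup (H i)] [∀ i, CompleteSpace (H i)] :
    CompleteSpace (PiLp p H) :=
  inferInstance

/-- In the setting of Statement 17
(`h x = ∑_{k ∈ K} φ(‖(⟨x 1, e 1 k⟩, …, ⟨x M, e M k⟩)‖₂)` on the Hilbert direct sum
`H 1 ⊕ ⋯ ⊕ H M`), for `γ > 0` and `x`, with
`δ k = prox_{γφ}(N k)/N k` if `max_i |⟨x i, e i k⟩| > 0` and `δ k = 1` otherwise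
(`N k` the Euclidean norm of the coefficient vector), one has
`prox_{γh} x = (∑_k δ k ⟨x i, e i k⟩ • e i k)_i`. -/
theorem stmt_18 (M : ℕ) (hM : 0 < M) (K : Set ℕ) (hK : K.Nonempty)
    (H : Fin M → Type*) [∀ i, NormedAddCommGroup (H i)] [∀ i, InnerProductSpace ℝ (H i)]
    [∀ i, CompleteSpace (H i)]
    (e : ∀ i, HilbertBasis K ℝ (H i))
    (β : ℝ) (hβ : 0 < β)
    (φ : ℝ → ℝ) (heven : ∀ t, φ (-t) = φ t) (hconv : ConvexOn ℝ Set.univ φ)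
    (hφ0 : φ 0 = 0) (hφnn : ∀ t, φ 0 ≤ φ t)
    (φ' : ℝ → ℝ) (hderiv : ∀ t, HasDerivAt φ (φ' t) t)
    (hlip : LipschitzWith (Real.toNNReal β) φ')
    (h : PiLp 2 H → ℝ)
    (hdef : ∀ x : PiLp 2 H,
      h x = ∑' k : K, φ (Real.sqrt (∑ i, (inner ℝ (x i) (e i k) : ℝ) ^ 2)))
    (γ : ℝ) (hγ : 0 < γ)
    -- `proxφ s = prox_{γφ} s` for every `s ∈ ℝ` :
    (proxφ : ℝ → ℝ)
    (hproxφ : ∀ s t : ℝ, γ * φ (proxφ s) + (s - proxφ s) ^ 2 / 2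
      ≤ γ * φ t + (s - t) ^ 2 / 2)
    (x : PiLp 2 H) (δ : K → ℝ)
    -- definition of `δ k` when `max_i |⟨x i, e i k⟩| > 0` :
    (hδ1 : ∀ k : K, (∃ i, (inner ℝ (x i) (e i k) : ℝ) ≠ 0) →
      δ k = proxφ (Real.sqrt (∑ i, (inner ℝ (x i) (e i k) : ℝ) ^ 2)) /
        Real.sqrt (∑ i, (inner ℝ (x i) (e i k) : ℝ) ^ 2))
    -- definition of `δ k` otherwise :
    (hδ2 : ∀ k : K, (∀ i, (inner ℝ (x i) (e i k) : ℝ) = 0) → δ k = 1)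
    -- `p = prox_{γh} x` :
    (p : PiLp 2 H)
    (hp : ∀ y : PiLp 2 H, γ * h p + ‖x - p‖ ^ 2 / 2 ≤ γ * h y + ‖x - y‖ ^ 2 / 2) :
    p = (WithLp.toLp 2 (fun i => ∑' k : K, δ k • (inner ℝ (x i) (e i k) : ℝ) • e i k : ∀ i, H i) :
      PiLp 2 H) := by
  classical
  have hφnn' : ∀ t, 0 ≤ φ t := fun t => hφ0 ▸ hφnn t
  have hmono := aux_mono φ hconv hφ0 hφnn
  have hquad := aux_quad φ heven hφ0 φ' hderiv β hβ hlip
  have hpnn := aux_prox_nonneg γ hγ φ heven hφ0 hφnn proxφ hproxφ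
  have hple := aux_prox_le γ hγ φ hconv hφ0 hφnn hmono proxφ hproxφ hpnn
  -- Parseval per coordinate
  have hpars : ∀ (y : PiLp 2 H) (i : Fin M),
      HasSum (fun k : K => (inner ℝ (y i) (e i k) : ℝ) ^ 2) (‖y i‖ ^ 2) :=
    fun y i => aux_parseval (e i) (y i)
  -- the distance as a sum over k
  have hDsum : ∀ y : PiLp 2 H,
      HasSum (fun k : K => ∑ i, ((inner ℝ (x i) (e i k) : ℝ) - inner ℝ (y i) (e i k)) ^ 2)
        (‖x - y‖ ^ 2) := by
    intro y
    have h1 : ∀ i : Fin M, HasSum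
        (fun k : K => ((inner ℝ (x i) (e i k) : ℝ) - inner ℝ (y i) (e i k)) ^ 2)
        (‖(x - y) i‖ ^ 2) := by
      intro i
      have h2 : (fun k : K => ((inner ℝ (x i) (e i k) : ℝ) - inner ℝ (y i) (e i k)) ^ 2)
          = fun k : K => (inner ℝ ((x - y) i) (e i k) : ℝ) ^ 2 := by
        funext k
        rw [PiLp.sub_apply, inner_sub_left]
      rw [h2]
      exact hpars (x - y) i
    have h3 := hasSum_sum (s := Finset.univ) (fun i _ => h1 i)
    rwa [← PiLp.norm_sq_eq_of_L2] at h3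
  -- summability of the coefficient squares
  have hSsum : ∀ y : PiLp 2 H,
      Summable (fun k : K => ∑ i, (inner ℝ (y i) (e i k) : ℝ) ^ 2) :=
    fun y => (hasSum_sum (s := Finset.univ) (fun i _ => hpars y i)).summable
  -- summability of the φ-terms
  have hphis : ∀ y : PiLp 2 H,
      Summable (fun k : K => φ (Real.sqrt (∑ i, (inner ℝ (y i) (e i k) : ℝ) ^ 2))) := by
    intro y
    apply Summable.of_nonneg_of_le (fun k => hφnn' _) (fun k => ?_) ((hSsum y).mul_left β)
    calc φ (Real.sqrt (∑ i, (inner ℝ (y i) (e i k) : ℝ) ^ 2))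
        ≤ β * (Real.sqrt (∑ i, (inner ℝ (y i) (e i k) : ℝ) ^ 2)) ^ 2 :=
          hquad _ (Real.sqrt_nonneg _)
      _ = β * (∑ i, (inner ℝ (y i) (e i k) : ℝ) ^ 2) := by
          rw [Real.sq_sqrt (by positivity)]
  have hgsum : ∀ y : PiLp 2 H,
      Summable (fun k : K =>
        γ * φ (Real.sqrt (∑ i, (inner ℝ (y i) (e i k) : ℝ) ^ 2)) +
          (∑ i, ((inner ℝ (x i) (e i k) : ℝ) - inner ℝ (y i) (e i k)) ^ 2) / 2) :=
    fun y => ((hphis y).mul_left γ).add ((hDsum y).summable.div_const 2)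
  -- the objective as a tsum
  have hF : ∀ y : PiLp 2 H, γ * h y + ‖x - y‖ ^ 2 / 2
      = ∑' k : K, (γ * φ (Real.sqrt (∑ i, (inner ℝ (y i) (e i k) : ℝ) ^ 2)) +
          (∑ i, ((inner ℝ (x i) (e i k) : ℝ) - inner ℝ (y i) (e i k)) ^ 2) / 2) := by
    intro y
    rw [Summable.tsum_add ((hphis y).mul_left γ) ((hDsum y).summable.div_const 2), tsum_mul_left,
      tsum_div_const, hdef y, (hDsum y).tsum_eq]
  -- positivity of N in the nonzero case
  have hNpos : ∀ k : K, (∃ i, (inner ℝ (x i) (e i k) : ℝ) ≠ 0) →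
      0 < Real.sqrt (∑ i, (inner ℝ (x i) (e i k) : ℝ) ^ 2) := by
    rintro k ⟨i, hi⟩
    apply Real.sqrt_pos.mpr
    exact Finset.sum_pos' (fun j _ => sq_nonneg _) ⟨i, Finset.mem_univ i, by positivity⟩
  -- δ k ∈ [0,1]
  have hδ01 : ∀ k : K, 0 ≤ δ k ∧ δ k ≤ 1 := by
    intro k
    by_cases hc : ∀ i, (inner ℝ (x i) (e i k) : ℝ) = 0
    · rw [hδ2 k hc]; norm_num
    · push_neg at hc
      have hN := hNpos k hc
      rw [hδ1 k hc]
      exact ⟨div_nonneg (hpnn _ (Real.sqrt_nonneg _)) hN.le,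
        (div_le_one hN).mpr (hple _ (Real.sqrt_nonneg _))⟩
  -- construct the candidate Q
  have hQex : ∀ i, ∃ v : H i,
      HasSum (fun k : K => (δ k * inner ℝ (x i) (e i k)) • e i k) v ∧
      ∀ k, (inner ℝ v (e i k) : ℝ) = δ k * inner ℝ (x i) (e i k) := by
    intro i
    apply aux_recon
    apply Summable.of_nonneg_of_le (fun k => sq_nonneg _) (fun k => ?_) (hpars x i).summable
    obtain ⟨h01, h02⟩ := hδ01 k
    have hδsq : δ k ^ 2 ≤ 1 := by nlinarith
    calc (δ k * inner ℝ (x i) (e i k)) ^ 2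
        = δ k ^ 2 * (inner ℝ (x i) (e i k) : ℝ) ^ 2 := by ring
      _ ≤ 1 * (inner ℝ (x i) (e i k) : ℝ) ^ 2 :=
          mul_le_mul_of_nonneg_right hδsq (sq_nonneg _)
      _ = _ := one_mul _
  choose v hv1 hv2 using hQex
  set Q : PiLp 2 H := WithLp.toLp 2 v with hQdefn
  have hQeq : (WithLp.toLp 2 (fun i => ∑' k : K, δ k • (inner ℝ (x i) (e i k) : ℝ) • e i k : ∀ i, H i) :
      PiLp 2 H) = Q := by
    congr 1; funext i
    have h2 : (fun k : K => δ k • (inner ℝ (x i) (e i k) : ℝ) • e i k)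
        = fun k : K => (δ k * inner ℝ (x i) (e i k)) • e i k := by
      funext k; rw [smul_smul]
    show (∑' k : K, δ k • (inner ℝ (x i) (e i k) : ℝ) • e i k) = v i
    rw [h2, (hv1 i).tsum_eq]
  rw [hQeq]
  have hQco : ∀ (k : K) (i : Fin M), (inner ℝ (Q i) (e i k) : ℝ) = δ k * inner ℝ (x i) (e i k) :=
    fun k i => hv2 i k
  -- the key pointwise inequality
  have hkey : ∀ (y : PiLp 2 H) (k : K),
      γ * φ (Real.sqrt (∑ i, (inner ℝ (Q i) (e i k) : ℝ) ^ 2)) +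
        (∑ i, ((inner ℝ (x i) (e i k) : ℝ) - inner ℝ (Q i) (e i k)) ^ 2) / 2
      ≤ γ * φ (Real.sqrt (∑ i, (inner ℝ (y i) (e i k) : ℝ) ^ 2)) +
        (∑ i, ((inner ℝ (x i) (e i k) : ℝ) - inner ℝ (y i) (e i k)) ^ 2) / 2 := by
    intro y k
    have hRnn : 0 ≤ γ * φ (Real.sqrt (∑ i, (inner ℝ (y i) (e i k) : ℝ) ^ 2)) +
        (∑ i, ((inner ℝ (x i) (e i k) : ℝ) - inner ℝ (y i) (e i k)) ^ 2) / 2 := by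
      have := hφnn' (Real.sqrt (∑ i, (inner ℝ (y i) (e i k) : ℝ) ^ 2))
      have h2 : (0:ℝ) ≤ ∑ i, ((inner ℝ (x i) (e i k) : ℝ) - inner ℝ (y i) (e i k)) ^ 2 := by
        positivity
      nlinarith
    by_cases hc : ∀ i, (inner ℝ (x i) (e i k) : ℝ) = 0
    · have hQ0 : ∀ i, (inner ℝ (Q i) (e i k) : ℝ) = 0 := by
        intro i; rw [hQco k i, hc i, mul_zero]
      have hL : γ * φ (Real.sqrt (∑ i, (inner ℝ (Q i) (e i k) : ℝ) ^ 2)) +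
          (∑ i, ((inner ℝ (x i) (e i k) : ℝ) - inner ℝ (Q i) (e i k)) ^ 2) / 2 = 0 := by
        simp [hQ0, hc, hφ0]
      rw [hL]; exact hRnn
    · push_neg at hc
      have hN := hNpos k hc
      have hδk := hδ1 k hc
      have hδN : δ k * Real.sqrt (∑ i, (inner ℝ (x i) (e i k) : ℝ) ^ 2)
          = proxφ (Real.sqrt (∑ i, (inner ℝ (x i) (e i k) : ℝ) ^ 2)) := by
        rw [hδk]; field_simp
      have hTQ : Real.sqrt (∑ i, (inner ℝ (Q i) (e i k) : ℝ) ^ 2)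
          = proxφ (Real.sqrt (∑ i, (inner ℝ (x i) (e i k) : ℝ) ^ 2)) := by
        have h1 : (∑ i, (inner ℝ (Q i) (e i k) : ℝ) ^ 2)
            = δ k ^ 2 * ∑ i, (inner ℝ (x i) (e i k) : ℝ) ^ 2 := by
          rw [Finset.mul_sum]
          refine Finset.sum_congr rfl fun i _ => ?_
          rw [hQco k i]; ring
        rw [h1, Real.sqrt_mul (sq_nonneg _), Real.sqrt_sq_eq_abs,
          abs_of_nonneg (hδ01 k).1, hδN]
      have hDQ : (∑ i, ((inner ℝ (x i) (e i k) : ℝ) - inner ℝ (Q i) (e i k)) ^ 2)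
          = (Real.sqrt (∑ i, (inner ℝ (x i) (e i k) : ℝ) ^ 2) -
              proxφ (Real.sqrt (∑ i, (inner ℝ (x i) (e i k) : ℝ) ^ 2))) ^ 2 := by
        have h1 : (∑ i, ((inner ℝ (x i) (e i k) : ℝ) - inner ℝ (Q i) (e i k)) ^ 2)
            = (1 - δ k) ^ 2 * ∑ i, (inner ℝ (x i) (e i k) : ℝ) ^ 2 := by
          rw [Finset.mul_sum]
          refine Finset.sum_congr rfl fun i _ => ?_
          rw [hQco k i]; ring
        calc (∑ i, ((inner ℝ (x i) (e i k) : ℝ) - inner ℝ (Q i) (e i k)) ^ 2)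
            = (1 - δ k) ^ 2 * ∑ i, (inner ℝ (x i) (e i k) : ℝ) ^ 2 := h1
          _ = (1 - δ k) ^ 2 * (Real.sqrt (∑ i, (inner ℝ (x i) (e i k) : ℝ) ^ 2)) ^ 2 := by
              rw [Real.sq_sqrt (by positivity :
                (0:ℝ) ≤ ∑ i, (inner ℝ (x i) (e i k) : ℝ) ^ 2)]
          _ = (Real.sqrt (∑ i, (inner ℝ (x i) (e i k) : ℝ) ^ 2) -
                δ k * Real.sqrt (∑ i, (inner ℝ (x i) (e i k) : ℝ) ^ 2)) ^ 2 := by ring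
          _ = _ := by rw [hδN]
      rw [hTQ, hDQ]
      have h3 := hproxφ (Real.sqrt (∑ i, (inner ℝ (x i) (e i k) : ℝ) ^ 2))
        (Real.sqrt (∑ i, (inner ℝ (y i) (e i k) : ℝ) ^ 2))
      have h4 := aux_tri (fun i => (inner ℝ (x i) (e i k) : ℝ))
        (fun i => (inner ℝ (y i) (e i k) : ℝ))
      linarith
  -- Q is a global minimizer
  have hFQle : ∀ y : PiLp 2 H,
      γ * h Q + ‖x - Q‖ ^ 2 / 2 ≤ γ * h y + ‖x - y‖ ^ 2 / 2 := by
    intro y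
    rw [hF Q, hF y]
    exact Summable.tsum_le_tsum (hkey y) (hgsum Q) (hgsum y)
  have hEq : γ * h p + ‖x - p‖ ^ 2 / 2 = γ * h Q + ‖x - Q‖ ^ 2 / 2 :=
    le_antisymm (hp Q) (hFQle p)
  -- midpoint argument
  set m : PiLp 2 H := (2⁻¹ : ℝ) • (p + Q) with hmdefn
  have hBm : ∀ (k : K) (i : Fin M), (inner ℝ (m i) (e i k) : ℝ)
      = ((inner ℝ (p i) (e i k) : ℝ) + (inner ℝ (Q i) (e i k) : ℝ)) / 2 := by
    intro k i
    rw [hmdefn, PiLp.smul_apply, PiLp.add_apply, real_inner_smul_left, inner_add_left]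
    ring
  have hhm : h m ≤ (h p + h Q) / 2 := by
    rw [hdef m, hdef p, hdef Q]
    have hterm : ∀ k : K, φ (Real.sqrt (∑ i, (inner ℝ (m i) (e i k) : ℝ) ^ 2))
        ≤ (φ (Real.sqrt (∑ i, (inner ℝ (p i) (e i k) : ℝ) ^ 2)) +
           φ (Real.sqrt (∑ i, (inner ℝ (Q i) (e i k) : ℝ) ^ 2))) / 2 := by
      intro k
      have h1 : Real.sqrt (∑ i, (inner ℝ (m i) (e i k) : ℝ) ^ 2)
          ≤ (Real.sqrt (∑ i, (inner ℝ (p i) (e i k) : ℝ) ^ 2) +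
             Real.sqrt (∑ i, (inner ℝ (Q i) (e i k) : ℝ) ^ 2)) / 2 := by
        have h2 : (∑ i, (inner ℝ (m i) (e i k) : ℝ) ^ 2)
            = ∑ i, (((inner ℝ (p i) (e i k) : ℝ) + (inner ℝ (Q i) (e i k) : ℝ)) / 2) ^ 2 := by
          refine Finset.sum_congr rfl fun i _ => ?_
          rw [hBm k i]
        rw [h2]
        exact aux_tri2 (fun i => (inner ℝ (p i) (e i k) : ℝ))
          (fun i => (inner ℝ (Q i) (e i k) : ℝ))
      have h2 := hmono _ _ (Real.sqrt_nonneg _) h1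
      have h3 := hconv.2 (Set.mem_univ (Real.sqrt (∑ i, (inner ℝ (p i) (e i k) : ℝ) ^ 2)))
        (Set.mem_univ (Real.sqrt (∑ i, (inner ℝ (Q i) (e i k) : ℝ) ^ 2)))
        (show (0:ℝ) ≤ 1/2 by norm_num) (show (0:ℝ) ≤ 1/2 by norm_num)
        (show (1:ℝ)/2 + 1/2 = 1 by norm_num)
      simp only [smul_eq_mul] at h3
      have h4 : (1:ℝ)/2 * Real.sqrt (∑ i, (inner ℝ (p i) (e i k) : ℝ) ^ 2) +
          1/2 * Real.sqrt (∑ i, (inner ℝ (Q i) (e i k) : ℝ) ^ 2)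
          = (Real.sqrt (∑ i, (inner ℝ (p i) (e i k) : ℝ) ^ 2) +
             Real.sqrt (∑ i, (inner ℝ (Q i) (e i k) : ℝ) ^ 2)) / 2 := by ring
      rw [h4] at h3
      linarith
    calc (∑' k : K, φ (Real.sqrt (∑ i, (inner ℝ (m i) (e i k) : ℝ) ^ 2)))
        ≤ ∑' k : K, (φ (Real.sqrt (∑ i, (inner ℝ (p i) (e i k) : ℝ) ^ 2)) +
             φ (Real.sqrt (∑ i, (inner ℝ (Q i) (e i k) : ℝ) ^ 2))) / 2 :=
          Summable.tsum_le_tsum hterm (hphis m) (((hphis p).add (hphis Q)).div_const 2)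
      _ = _ := by rw [tsum_div_const, Summable.tsum_add (hphis p) (hphis Q)]
  have hxm : x - m = (2⁻¹ : ℝ) • ((x - p) + (x - Q)) := by
    rw [hmdefn]
    module
  have hnm : ‖x - m‖ ^ 2
      = (2 * ‖x - p‖ ^ 2 + 2 * ‖x - Q‖ ^ 2 - ‖Q - p‖ ^ 2) / 4 := by
    rw [hxm, norm_smul]
    have hpar := parallelogram_law_with_norm ℝ (x - p) (x - Q)
    have hsub : (x - p) - (x - Q) = Q - p := by abel
    rw [hsub] at hpar
    have hn2 : ‖(2⁻¹ : ℝ)‖ = 2⁻¹ := by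
      rw [norm_inv, Real.norm_ofNat]
    rw [hn2]
    ring_nf
    ring_nf at hpar
    linarith
  have h5 := hp m
  have h6 := mul_le_mul_of_nonneg_left hhm hγ.le
  have h7 : ‖Q - p‖ ^ 2 ≤ 0 := by nlinarith
  have h8 : ‖Q - p‖ = 0 := by nlinarith [norm_nonneg (Q - p)]
  exact (eq_of_sub_eq_zero (norm_eq_zero.mp h8)).symm
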